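/- Let H₁ and H₂ be graphs with at least one edge, and let p₁, p₂ ∈ (0,1) with p₁ + p₂ = 1. If both H₁ and H₂ are Sidorenko (i.e., t(Hᵢ, W) ≥ t(K₂, W)^{e(Hᵢ)} for every graphon W), then for all graphons W₁, W₂ with W₁ + W₂ = 1, we have t(H₁,W₁)/(e(H₁)·p₁^{e(H₁)-1}) + t(H₂,W₂)/(e(H₂)·p₂^{e(H₂)-1}) ≥ p₁/e(H₁) + p₂/e(H₂). -/

import Mathlib

open MeasureTheory Finset

/-- The uniform measure on the unit interval `[0,1]`, as a measure on `ℝ`. -/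
noncomputable def unitM : Measure ℝ := volume.restrict (Set.Icc 0 1)

instance : SigmaFinite unitM := by unfold unitM; infer_instance

/-- Value of a symmetric two-variable function on an unordered pair of vertices. -/
noncomputable def symEdge {α : Type*} (W : ℝ → ℝ → ℝ) (x : α → ℝ) : Sym2 α → ℝ :=
  Sym2.lift ⟨fun u v => (W (x u) (x v) + W (x v) (x u)) / 2, fun u v => by ring⟩

open Classical in
/-- Homomorphism density of a finite simple graph in a kernel. -/
noncomputable def homDensity {V : Type*} [Fintype V] (G : SimpleGraph V)
    (W : ℝ → ℝ → ℝ) : ℝ :=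
  ∫ x : V → ℝ, ∏ e ∈ G.edgeFinset, symEdge W x e ∂(Measure.pi fun _ => unitM)

/-- Number of edges of a graph. -/
noncomputable def eCount {V : Type*} (G : SimpleGraph V) : ℕ := G.edgeSet.ncard

def IsSymm2 (W : ℝ → ℝ → ℝ) : Prop := ∀ x y, W x y = W y x

/-- A kernel: bounded, symmetric, measurable. -/
def IsKernel (W : ℝ → ℝ → ℝ) : Prop :=
  Measurable (Function.uncurry W) ∧ IsSymm2 W ∧ ∃ C, ∀ x y, |W x y| ≤ C

/-- A graphon: symmetric measurable with values in `[0,1]`. -/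
def IsGraphon (W : ℝ → ℝ → ℝ) : Prop :=
  Measurable (Function.uncurry W) ∧ IsSymm2 W ∧ ∀ x y, W x y ∈ Set.Icc (0:ℝ) 1

/-- The pair `(G₁, G₂)` is `(p₁,p₂)`-common. -/
def IsCommonPair {V₁ V₂ : Type*} [Fintype V₁] [Fintype V₂]
    (G₁ : SimpleGraph V₁) (G₂ : SimpleGraph V₂) (p₁ p₂ : ℝ) : Prop :=
  ∀ W₁ W₂ : ℝ → ℝ → ℝ, IsGraphon W₁ → IsGraphon W₂ → (∀ x y, W₁ x y + W₂ x y = 1) →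
    homDensity G₁ W₁ / (eCount G₁ * p₁ ^ (eCount G₁ - 1))
      + homDensity G₂ W₂ / (eCount G₂ * p₂ ^ (eCount G₂ - 1))
      ≥ p₁ / eCount G₁ + p₂ / eCount G₂

/-- The edge density `t(K₂, W)` of a kernel. -/
noncomputable def edgeDensity2 (W : ℝ → ℝ → ℝ) : ℝ :=
  ∫ x, ∫ y, W x y ∂unitM ∂unitM

/-- A graph is Sidorenko if `t(H,W) ≥ t(K₂,W)^{e(H)}` for every graphon `W`. -/
def IsSidorenko {V : Type*} [Fintype V] (G : SimpleGraph V) : Prop :=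
  ∀ W : ℝ → ℝ → ℝ, IsGraphon W → homDensity G W ≥ edgeDensity2 W ^ eCount G

instance : IsProbabilityMeasure unitM := by
  constructor
  rw [unitM, Measure.restrict_apply_univ, Real.volume_Icc]
  norm_num

lemma integrable_slice {W : ℝ → ℝ → ℝ} (hW : IsGraphon W) (x : ℝ) :
    Integrable (W x) unitM := by
  refine ⟨(hW.1.of_uncurry_left).aestronglyMeasurable, ?_⟩
  apply HasFiniteIntegral.of_bounded (C := 1)
  filter_upwards with y
  rw [Real.norm_eq_abs]
  exact abs_le.mpr ⟨by linarith [(hW.2.2 x y).1], (hW.2.2 x y).2⟩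

lemma integrable_F {W : ℝ → ℝ → ℝ} (hW : IsGraphon W) :
    Integrable (fun x => ∫ y, W x y ∂unitM) unitM := by
  have hsm : StronglyMeasurable (fun p : ℝ × ℝ => W p.1 p.2) := hW.1.stronglyMeasurable
  refine ⟨(hsm.integral_prod_right').aestronglyMeasurable, ?_⟩
  apply HasFiniteIntegral.of_bounded (C := 1)
  filter_upwards with x
  calc ‖∫ y, W x y ∂unitM‖ ≤ 1 * (unitM Set.univ).toReal := by
        apply norm_integral_le_of_norm_le_const
        filter_upwards with y
        rw [Real.norm_eq_abs]
        exact abs_le.mpr ⟨by linarith [(hW.2.2 x y).1], (hW.2.2 x y).2⟩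
    _ = 1 := by simp

lemma edge_sum {W₁ W₂ : ℝ → ℝ → ℝ} (h₁ : IsGraphon W₁) (h₂ : IsGraphon W₂)
    (hc : ∀ x y, W₁ x y + W₂ x y = 1) :
    edgeDensity2 W₁ + edgeDensity2 W₂ = 1 := by
  unfold edgeDensity2
  rw [← integral_add (integrable_F h₁) (integrable_F h₂)]
  have : ∀ x, (∫ y, W₁ x y ∂unitM) + (∫ y, W₂ x y ∂unitM) = 1 := by
    intro x
    rw [← integral_add (integrable_slice h₁ x) (integrable_slice h₂ x)]
    simp [hc x]
  simp only [this]
  simp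

lemma edge_nonneg {W : ℝ → ℝ → ℝ} (hW : IsGraphon W) : 0 ≤ edgeDensity2 W := by
  apply integral_nonneg
  intro x
  exact integral_nonneg fun y => (hW.2.2 x y).1

lemma pow_tangent (x p : ℝ) (hx : 0 ≤ x) (hp : 0 < p) (m : ℕ) (hm : 1 ≤ m) :
    p ^ m + m * p ^ (m - 1) * (x - p) ≤ x ^ m := by
  obtain ⟨k, rfl⟩ := Nat.exists_eq_add_of_le hm
  have ha : (-2:ℝ) ≤ x / p - 1 := by
    have : 0 ≤ x / p := div_nonneg hx hp.le
    linarith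
  have hb := one_add_mul_le_pow ha (1 + k)
  have hpk : (0:ℝ) < p ^ (1 + k) := pow_pos hp _
  have hmm := mul_le_mul_of_nonneg_right hb hpk.le
  have hxp : (1 + (x / p - 1)) ^ (1 + k) * p ^ (1 + k) = x ^ (1 + k) := by
    rw [← mul_pow]
    congr 1
    field_simp
    ring
  rw [hxp] at hmm
  have hexp : p ^ (1 + k) = p * p ^ k := by ring
  calc p ^ (1 + k) + (1 + k : ℕ) * p ^ (1 + k - 1) * (x - p)
      = (1 + (1 + k : ℕ) * (x / p - 1)) * p ^ (1 + k) := by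
        simp only [Nat.add_sub_cancel, Nat.add_sub_cancel_left, Nat.cast_add, Nat.cast_one]
        rw [hexp]
        field_simp
    _ ≤ x ^ (1 + k) := hmm

/-- If `H₁` and `H₂` are Sidorenko graphs with at least one edge, then `(H₁, H₂)`
is `(p₁, p₂)`-common for all `p₁, p₂ ∈ (0,1)` with `p₁ + p₂ = 1`. -/
theorem sidorenko_pair_common {V₁ V₂ : Type*} [Fintype V₁] [Fintype V₂]
    (G₁ : SimpleGraph V₁) (G₂ : SimpleGraph V₂)
    (h₁ : 1 ≤ eCount G₁) (h₂ : 1 ≤ eCount G₂)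
    (p₁ p₂ : ℝ) (hp₁ : p₁ ∈ Set.Ioo (0:ℝ) 1) (hp₂ : p₂ ∈ Set.Ioo (0:ℝ) 1)
    (hsum : p₁ + p₂ = 1)
    (hs₁ : IsSidorenko G₁) (hs₂ : IsSidorenko G₂) :
    IsCommonPair G₁ G₂ p₁ p₂ := by
  intro W₁ W₂ hW₁ hW₂ hc
  set m := eCount G₁ with hmdef
  set n := eCount G₂ with hndef
  set t := edgeDensity2 W₁ with htdef
  obtain ⟨hq₁, _⟩ := hp₁
  obtain ⟨hq₂, _⟩ := hp₂
  have hd₁ : homDensity G₁ W₁ ≥ t ^ m := hs₁ W₁ hW₁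
  have hd₂ : homDensity G₂ W₂ ≥ edgeDensity2 W₂ ^ n := hs₂ W₂ hW₂
  have ht0 : 0 ≤ t := edge_nonneg hW₁
  have hs0 : 0 ≤ edgeDensity2 W₂ := edge_nonneg hW₂
  have hes : t + edgeDensity2 W₂ = 1 := edge_sum hW₁ hW₂ hc
  have hW₂t : edgeDensity2 W₂ = 1 - t := by linarith
  rw [hW₂t] at hd₂
  have hm0 : (0:ℝ) < m := by exact_mod_cast h₁
  have hn0 : (0:ℝ) < n := by exact_mod_cast h₂
  have hD₁ : (0:ℝ) < m * p₁ ^ (m - 1) := by positivity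
  have hD₂ : (0:ℝ) < n * p₂ ^ (n - 1) := by positivity
  have hpm : p₁ * p₁ ^ (m - 1) = p₁ ^ m := by
    rw [← pow_succ']; congr 1; omega
  have hpn : p₂ * p₂ ^ (n - 1) = p₂ ^ n := by
    rw [← pow_succ']; congr 1; omega
  have tan₁ := pow_tangent t p₁ ht0 hq₁ m h₁
  have tan₂ := pow_tangent (1 - t) p₂ (by linarith) hq₂ n h₂
  have key₁ : p₁ / m + (t - p₁) ≤ homDensity G₁ W₁ / (m * p₁ ^ (m - 1)) := by
    rw [le_div_iff₀ hD₁]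
    have expand : (p₁ / m + (t - p₁)) * (m * p₁ ^ (m - 1))
        = p₁ * p₁ ^ (m - 1) + m * p₁ ^ (m - 1) * (t - p₁) := by
      field_simp
    rw [expand, hpm]
    linarith
  have key₂ : p₂ / n + ((1 - t) - p₂) ≤ homDensity G₂ W₂ / (n * p₂ ^ (n - 1)) := by
    rw [le_div_iff₀ hD₂]
    have expand : (p₂ / n + ((1 - t) - p₂)) * (n * p₂ ^ (n - 1))
        = p₂ * p₂ ^ (n - 1) + n * p₂ ^ (n - 1) * ((1 - t) - p₂) := by
      field_simp
    rw [expand, hpn]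
    linarith
  linarith
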